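/- Suppose R is F-pure and F-finite, and let 𝔞 be an ideal of R. Then the following statements are equivalent: (i) 𝔞 is uniformly F-compatible; (ii) 𝔞 is Φ(E)-special; (iii) 𝔞 is fully Φ(E)-special. -/

import Mathlib

open TensorProduct IsLocalRing DirectSum

universe u v

/-! ### Frobenius twists and base change -/

/-- `R` viewed as an algebra over itself via the `n`-th power of the Frobenius
endomorphism; this plays the role of `R^{(n)}` (an `R`-module via `r • s = r ^ p ^ n * s`). -/
def FrobAlg (R : Type u) (p n : ℕ) [CommRing R] [Fact p.Prime] [CharP R p] : Type u := R

namespace FrobAlg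

variable (R : Type u) (p n : ℕ) [CommRing R] [Fact p.Prime] [CharP R p]

instance : CommRing (FrobAlg R p n) := inferInstanceAs (CommRing R)

instance : Algebra R (FrobAlg R p n) :=
  RingHom.toAlgebra (show R →+* FrobAlg R p n from (frobenius R p) ^ n)

/-- The canonical identification of `R` with the underlying set of `R^{(n)}`. -/
def of (r : R) : FrobAlg R p n := r

end FrobAlg

/-- The Frobenius base change `R^{(n)} ⊗_R M` of an `R`-module `M` along the `n`-th
power of the Frobenius endomorphism of `R`. -/
def FrobBC (R : Type u) (p n : ℕ) [CommRing R] [Fact p.Prime] [CharP R p]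
    (M : Type v) [AddCommGroup M] [Module R M] : Type (max u v) :=
  FrobAlg R p n ⊗[R] M

namespace FrobBC

variable (R : Type u) (p n : ℕ) [CommRing R] [Fact p.Prime] [CharP R p]
  (M : Type v) [AddCommGroup M] [Module R M]

noncomputable instance : AddCommGroup (FrobBC R p n M) :=
  inferInstanceAs (AddCommGroup (FrobAlg R p n ⊗[R] M))

/-- The `R`-module structure on `R^{(n)} ⊗_R M` given by multiplication on the first
factor. -/
noncomputable instance : Module R (FrobBC R p n M) :=
  inferInstanceAs (Module (FrobAlg R p n) (FrobAlg R p n ⊗[R] M))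

variable {M}

/-- The elementary tensor `r ⊗ m` in `R^{(n)} ⊗_R M`. -/
noncomputable def tmul (r : R) (m : M) : FrobBC R p n M := FrobAlg.of R p n r ⊗ₜ[R] m

end FrobBC

/-- `R` is `F`-pure if for every `R`-module `M` the natural map
`M → R^{(1)} ⊗_R M`, `m ↦ 1 ⊗ m`, is injective. -/
def IsFPure (R : Type u) (p : ℕ) [CommRing R] [Fact p.Prime] [CharP R p] : Prop :=
  ∀ (M : Type u) [AddCommGroup M] [Module R M],
    Function.Injective fun m : M => FrobBC.tmul R p 1 (1 : R) m

/-- An ideal `𝔞` of `R` is fully `Φ(E)`-special if for every `n ≥ 1`, every `r ∈ 𝔞` and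
every `e ∈ (0 :_E 𝔞)`, the element `r ⊗ e` is zero in `R^{(n)} ⊗_R E`. -/
def IsFullyPhiSpecial (R : Type u) (p : ℕ) [CommRing R] [Fact p.Prime] [CharP R p]
    (E : Type v) [AddCommGroup E] [Module R E] (𝔞 : Ideal R) : Prop :=
  ∀ n : ℕ, 1 ≤ n → ∀ r ∈ 𝔞, ∀ e : E, (∀ a ∈ 𝔞, a • e = 0) → FrobBC.tmul R p n r e = 0

/-! ### The module `Φ(E)` and the Frobenius shift -/

/-- The Frobenius `a ↦ a ^ p`, as an `R`-algebra map `R^{(n)} → R^{(n+1)}`. -/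
def frobStepAlg (R : Type u) (p n : ℕ) [CommRing R] [Fact p.Prime] [CharP R p] :
    FrobAlg R p n →ₐ[R] FrobAlg R p (n + 1) :=
  { (show FrobAlg R p n →+* FrobAlg R p (n + 1) from frobenius R p) with
    commutes' := fun r => by
      show frobenius R p (((frobenius R p) ^ n) r) = ((frobenius R p) ^ (n + 1)) r
      rw [pow_succ']
      rfl }

/-- The Frobenius `a ↦ a ^ p`, as an `R`-linear map `R^{(n)} → R^{(n+1)}`. -/
def frobStep (R : Type u) (p n : ℕ) [CommRing R] [Fact p.Prime] [CharP R p] :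
    FrobAlg R p n →ₗ[R] FrobAlg R p (n + 1) :=
  (frobStepAlg R p n).toLinearMap

/-- The graded module `Φ(E) = ⊕_{n ≥ 0} R^{(n)} ⊗_R E`. -/
def PhiModule (R : Type u) (p : ℕ) [CommRing R] [Fact p.Prime] [CharP R p]
    (E : Type v) [AddCommGroup E] [Module R E] : Type (max u v) :=
  ⨁ n : ℕ, FrobBC R p n E

namespace PhiModule

variable (R : Type u) (p : ℕ) [CommRing R] [Fact p.Prime] [CharP R p]
  (E : Type v) [AddCommGroup E] [Module R E]

noncomputable instance : AddCommGroup (PhiModule R p E) :=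
  inferInstanceAs (AddCommGroup (⨁ n : ℕ, FrobBC R p n E))

noncomputable instance : Module R (PhiModule R p E) :=
  inferInstanceAs (Module R (⨁ n : ℕ, FrobBC R p n E))

/-- The inclusion of the `n`-th component into `Φ(E)`. -/
noncomputable def of (n : ℕ) (g : FrobBC R p n E) : PhiModule R p E :=
  DirectSum.of (fun m : ℕ => FrobBC R p m E) n g

/-- The Frobenius-semilinear shift operator `x` on `Φ(E)`, sending an element
`r ⊗ e` of the `n`-th component to `r ^ p ⊗ e` in the `(n+1)`-th component. -/
noncomputable def shift : PhiModule R p E →+ PhiModule R p E :=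
  DirectSum.toAddMonoid fun n =>
    (DirectSum.of (fun m : ℕ => FrobBC R p m E) (n + 1)).comp
      (TensorProduct.map (frobStep R p n) (LinearMap.id (R := R) (M := E))).toAddMonoidHom

end PhiModule

/-- An ideal `𝔞` of `R` is `Φ(E)`-special if it is the annihilator of an
`R[x,f]`-submodule of `Φ(E)`, i.e. of an `R`-submodule stable under the shift operator. -/
def IsPhiSpecial (R : Type u) (p : ℕ) [CommRing R] [Fact p.Prime] [CharP R p]
    (E : Type v) [AddCommGroup E] [Module R E] (𝔞 : Ideal R) : Prop :=
  ∃ N : Submodule R (PhiModule R p E),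
    (∀ g ∈ N, PhiModule.shift R p E g ∈ N) ∧ 𝔞 = N.annihilator

/-! ### Further notions -/

/-- The `q`-th bracket (Frobenius) power `I^{[q]}` of an ideal: the ideal generated by
the `q`-th powers of the elements of `I`. -/
def Ideal.bracketPow {S : Type u} [CommRing S] (I : Ideal S) (q : ℕ) : Ideal S :=
  Ideal.span ((fun x => x ^ q) '' (I : Set S))

/-- A Noetherian local ring is regular if its maximal ideal can be generated by
`dim S` elements. -/
def IsRegularLocal (S : Type u) [CommRing S] [IsLocalRing S] : Prop :=
  ∃ s : Finset S, (s.card : WithBot (WithTop ℕ)) = ringKrullDim S ∧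
    Ideal.span (s : Set S) = maximalIdeal S

/-- An ideal `𝔟` of `R` is uniformly `F`-compatible if for every `n ≥ 1` and every
`R`-linear map `φ : R^{(n)} → R` one has `φ(𝔟) ⊆ 𝔟`. -/
def UniformlyFCompatible (R : Type u) (p : ℕ) [CommRing R] [Fact p.Prime] [CharP R p]
    (𝔟 : Ideal R) : Prop :=
  ∀ n : ℕ, 1 ≤ n → ∀ φ : FrobAlg R p n →ₗ[R] R, ∀ b ∈ 𝔟, φ (FrobAlg.of R p n b) ∈ 𝔟

/-- `R` is `F`-finite if `R^{(1)}` is a finitely generated `R`-module. -/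
def IsFFinite (R : Type u) (p : ℕ) [CommRing R] [Fact p.Prime] [CharP R p] : Prop :=
  Module.Finite R (FrobAlg R p 1)

/-- A Noetherian local ring `T` of characteristic `p` is strongly `F`-regular in the
sense of Lyubeznik and Smith if the tight closure of `0` in the injective envelope of
the residue field of `T` is zero. -/
def IsStronglyFRegularLS (T : Type u) (p : ℕ) [CommRing T] [IsLocalRing T]
    [Fact p.Prime] [CharP T p] : Prop :=
  ∀ (ET : Type u) [AddCommGroup ET] [Module T ET],
    Module.Injective T ET →
    ∀ ι : (T ⧸ maximalIdeal T) →ₗ[T] ET, Function.Injective ι →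
    (∀ N : Submodule T ET, N ⊓ LinearMap.range ι = ⊥ → N = ⊥) →
    ∀ m : ET,
      (∃ c : T, (∀ P ∈ minimalPrimes T, c ∉ P) ∧
        ∃ N₀ : ℕ, ∀ n : ℕ, N₀ ≤ n → FrobBC.tmul T p n c m = 0) → m = 0

/-- `Q` is a minimal primary decomposition of the ideal `𝔄`: the `Q i` are primary,
`𝔄` is their intersection, their radicals are pairwise distinct, and none of them
contains the intersection of the others. -/
def IsMinimalPrimaryDecomposition {S : Type u} [CommRing S] (𝔄 : Ideal S) {t : ℕ}
    (Q : Fin t → Ideal S) : Prop :=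
  𝔄 = ⨅ i, Q i ∧ (∀ i, (Q i).IsPrimary) ∧
    (Function.Injective fun i => (Q i).radical) ∧
    ∀ i, ¬ (⨅ j, ⨅ (_ : j ≠ i), Q j) ≤ Q i

-- helpers chunk 1
section SharpHelpers

variable {R : Type u} [CommRing R] {p : ℕ} [Fact p.Prime] [CharP R p]

lemma frobPow_apply (n : ℕ) (r : R) : ((frobenius R p) ^ n) r = r ^ p ^ n := by
  have h : (⇑((frobenius R p) ^ n) : R → R) = (frobenius R p)^[n] :=
    RingHom.coe_pow (frobenius R p) n
  rw [show ((frobenius R p) ^ n) r = (frobenius R p)^[n] r from congrFun h r,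
    iterate_frobenius]

lemma frobAlg_algebraMap (n : ℕ) (c : R) :
    algebraMap R (FrobAlg R p n) c = FrobAlg.of R p n (c ^ p ^ n) :=
  frobPow_apply n c

lemma frobAlg_smul (n : ℕ) (c : R) (s : FrobAlg R p n) :
    c • s = FrobAlg.of R p n (c ^ p ^ n) * s := by
  rw [Algebra.smul_def, frobAlg_algebraMap]

lemma frobStep_apply (n : ℕ) (s : FrobAlg R p n) :
    frobStep R p n s = FrobAlg.of R p (n + 1) (s ^ p) := by
  show frobenius R p s = _
  exact frobenius_def ..

/-- Extension along a map with compatible kernels via injectivity of `E`. -/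
lemma extend_of_le_ker {E : Type u} [AddCommGroup E] [Module R E]
    (hE : Module.Injective R E) {P Q : Type u} [AddCommGroup P] [AddCommGroup Q]
    [Module R P] [Module R Q] (f : P →ₗ[R] Q) (σ : P →ₗ[R] E)
    (h : LinearMap.ker f ≤ LinearMap.ker σ) :
    ∃ Φ : Q →ₗ[R] E, ∀ z : P, Φ (f z) = σ z := by
  obtain ⟨Φ, hΦ⟩ := hE.out (LinearMap.range f).subtype (Submodule.injective_subtype _)
    ((Submodule.liftQ (LinearMap.ker f) σ h).comp f.quotKerEquivRange.symm.toLinearMap)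
  refine ⟨Φ, fun z => ?_⟩
  have h2 : f.quotKerEquivRange.symm ⟨f z, LinearMap.mem_range_self f z⟩
      = Submodule.Quotient.mk z := by
    apply f.quotKerEquivRange.injective
    rw [LinearEquiv.apply_symm_apply]
    exact (Subtype.ext (f.quotKerEquivRange_apply_mk z)).symm
  have h3 := hΦ ⟨f z, LinearMap.mem_range_self f z⟩
  have h4 : (LinearMap.range f).subtype ⟨f z, LinearMap.mem_range_self f z⟩ = f z := rfl
  rw [h4] at h3
  rw [h3, LinearMap.comp_apply, LinearEquiv.coe_coe, h2, Submodule.liftQ_apply]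

/-- The key cogenerator property of `E`. -/
lemma exists_colon_elt [IsLocalRing R] {E : Type u} [AddCommGroup E] [Module R E]
    (hE : Module.Injective R E)
    (ι : (R ⧸ maximalIdeal R) →ₗ[R] E) (hι : Function.Injective ι)
    (𝔞 : Ideal R) {r : R} (hr : r ∉ 𝔞) :
    ∃ e : E, (∀ a ∈ 𝔞, a • e = 0) ∧ r • e ≠ 0 := by
  have hx : (Submodule.Quotient.mk r : R ⧸ 𝔞) ≠ 0 :=
    fun h0 => hr ((Submodule.Quotient.mk_eq_zero _).mp h0)
  set T := LinearMap.toSpanSingleton R (R ⧸ 𝔞) (Submodule.Quotient.mk r) with hT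
  have hker : LinearMap.ker T ≤ maximalIdeal R := by
    apply IsLocalRing.le_maximalIdeal
    intro htop
    have h1 : (1 : R) ∈ LinearMap.ker T := htop ▸ trivial
    rw [LinearMap.mem_ker, hT, LinearMap.toSpanSingleton_apply_one] at h1
    exact hx h1
  have hle : LinearMap.ker T ≤ LinearMap.ker (ι.comp (maximalIdeal R).mkQ) := by
    intro c hc
    have h0 : (maximalIdeal R).mkQ c = 0 := (Submodule.Quotient.mk_eq_zero _).mpr (hker hc)
    rw [LinearMap.mem_ker, LinearMap.comp_apply, h0, map_zero]
  obtain ⟨Φ, hΦ⟩ := extend_of_le_ker hE T (ι.comp (maximalIdeal R).mkQ) hle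
  refine ⟨Φ (Submodule.Quotient.mk (1 : R)), fun a ha => ?_, ?_⟩
  · rw [← map_smul, ← Submodule.Quotient.mk_smul, smul_eq_mul, mul_one,
      (Submodule.Quotient.mk_eq_zero _).mpr ha, map_zero]
  · rw [← map_smul, ← Submodule.Quotient.mk_smul, smul_eq_mul, mul_one]
    have h2 : (Submodule.Quotient.mk r : R ⧸ 𝔞) = T 1 := by
      rw [hT, LinearMap.toSpanSingleton_apply_one]
    rw [h2, hΦ]
    intro hzero
    rw [LinearMap.comp_apply] at hzero
    have h5 : ((maximalIdeal R).mkQ (1 : R) : R ⧸ maximalIdeal R) = 0 :=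
      hι (by rw [map_zero]; exact hzero)
    have h6 : (1 : R) ∈ maximalIdeal R := (Submodule.Quotient.mk_eq_zero _).mp h5
    exact (Ideal.ne_top_iff_one _).mp
      (Ideal.IsMaximal.ne_top (IsLocalRing.maximalIdeal.isMaximal R)) h6

lemma mem_of_colon_ann [IsLocalRing R] {E : Type u} [AddCommGroup E] [Module R E]
    (hE : Module.Injective R E)
    (ι : (R ⧸ maximalIdeal R) →ₗ[R] E) (hι : Function.Injective ι)
    (𝔞 : Ideal R) (c : R)
    (hc : ∀ e : E, (∀ a ∈ 𝔞, a • e = 0) → c • e = 0) : c ∈ 𝔞 := by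
  by_contra hcn
  obtain ⟨e, he, hne⟩ := exists_colon_elt hE ι hι 𝔞 hcn
  exact hne (hc e he)

end SharpHelpers
section Detect

variable {R : Type u} [CommRing R] {E : Type u} [AddCommGroup E] [Module R E]

/-- Standard basis vector of `Fin m → R`. -/
def epi {R : Type u} [CommRing R] {m : ℕ} (i : Fin m) : Fin m → R := Pi.single i 1

/-- Contraction of a tensor in `M ⊗ E` against a functional on `M`. -/
noncomputable def ctr {M : Type u} [AddCommGroup M] [Module R M] (φ : M →ₗ[R] R) :
    M ⊗[R] E →ₗ[R] E := TensorProduct.lift ((LinearMap.lsmul R E).comp φ)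

lemma ctr_tmul {M : Type u} [AddCommGroup M] [Module R M] (φ : M →ₗ[R] R)
    (m : M) (e : E) : ctr φ (m ⊗ₜ[R] e) = φ m • e := by
  simp [ctr]

lemma ctr_comp {M N : Type u} [AddCommGroup M] [Module R M] [AddCommGroup N] [Module R N]
    (φ : N →ₗ[R] R) (v : M →ₗ[R] N) (w : M ⊗[R] E) :
    ctr (φ ∘ₗ v) w = ctr φ (v.rTensor E w) := by
  induction w using TensorProduct.induction_on with
  | zero => simp
  | tmul m e => simp [ctr_tmul, LinearMap.rTensor_tmul]
  | add x y hx hy => simp [map_add, hx, hy]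

lemma ctr_sum_smul {b : ℕ} (c : Fin b → R) (w : (Fin b → R) ⊗[R] E) :
    ctr (∑ i, c i • (LinearMap.proj i : (Fin b → R) →ₗ[R] R)) w
      = ∑ i, c i • ctr (R := R) (LinearMap.proj i) w := by
  induction w using TensorProduct.induction_on with
  | zero => simp
  | tmul d e =>
    simp only [ctr_tmul, LinearMap.sum_apply, LinearMap.smul_apply, LinearMap.proj_apply,
      smul_eq_mul, Finset.sum_smul, mul_smul]
  | add x y hx hy => simp [map_add, hx, hy, Finset.sum_add_distrib]

lemma single_eq_smul_epi {m : ℕ} (i : Fin m) (r : R) :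
    Pi.single i r = r • (epi i : Fin m → R) := by
  rw [epi, ← Pi.single_smul, smul_eq_mul, mul_one]

lemma pisingle_sum_mul {m : ℕ} (i : Fin m) (d : Fin m → R) :
    (∑ k, (epi i : Fin m → R) k * d k) = d i := by
  simp [epi, Pi.single_apply, Finset.sum_ite_eq]

lemma pisingle_sum_smul {m : ℕ} (i : Fin m) (d : Fin m → E) :
    (∑ k, (epi i : Fin m → R) k • d k) = d i := by
  simp [epi, Pi.single_apply, ite_smul, Finset.sum_ite_eq]

lemma tensor_pi_decomp {b : ℕ} (w : (Fin b → R) ⊗[R] E) :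
    w = ∑ i, (epi i : Fin b → R) ⊗ₜ[R] ctr (R := R) (LinearMap.proj i) w := by
  induction w using TensorProduct.induction_on with
  | zero => simp
  | tmul d e =>
    have h1 : ∀ i : Fin b, ctr (R := R) (LinearMap.proj i) (d ⊗ₜ[R] e) = d i • e := by
      intro i; rw [ctr_tmul]; rfl
    calc d ⊗ₜ[R] e = (∑ i, Pi.single i (d i)) ⊗ₜ[R] e := by rw [Finset.univ_sum_single]
      _ = ∑ i, (Pi.single i (d i)) ⊗ₜ[R] e := TensorProduct.sum_tmul _ _ _
      _ = ∑ i, (epi i : Fin b → R) ⊗ₜ[R] (d i • e) := by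
          refine Finset.sum_congr rfl fun i _ => ?_
          rw [single_eq_smul_epi, TensorProduct.smul_tmul]
      _ = ∑ i, (epi i : Fin b → R) ⊗ₜ[R] ctr (R := R) (LinearMap.proj i) (d ⊗ₜ[R] e) := by
          refine Finset.sum_congr rfl fun i _ => ?_
          rw [h1]
  | add x y hx hy =>
    conv_lhs => rw [hx, hy]
    simp only [map_add, TensorProduct.tmul_add, Finset.sum_add_distrib]

lemma tensor_detect [IsNoetherianRing R] (hE : Module.Injective R E)
    {M : Type u} [AddCommGroup M] [Module R M] (hfin : Module.Finite R M)
    (z : M ⊗[R] E) (hz : ∀ φ : M →ₗ[R] R, ctr φ z = 0) : z = 0 := by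
  classical
  obtain ⟨b, mg, hmg⟩ := Module.Finite.exists_fin (R := R) (M := M)
  set v : (Fin b → R) →ₗ[R] M := Fintype.linearCombination R mg with hv0
  have hv : Function.Surjective v := by
    intro m
    have hm : m ∈ Submodule.span R (Set.range mg) := by rw [hmg]; trivial
    obtain ⟨c, hc⟩ := (Submodule.mem_span_range_iff_exists_fun R).mp hm
    exact ⟨c, by rw [hv0, Fintype.linearCombination_apply]; exact hc⟩
  obtain ⟨a, kg, hkg⟩ := Submodule.fg_iff_exists_fin_generating_family.mp
    (IsNoetherian.noetherian (LinearMap.ker v))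
  set u : (Fin a → R) →ₗ[R] (Fin b → R) := Fintype.linearCombination R kg with hu0
  have hrange : LinearMap.range u = LinearMap.ker v := by
    rw [hu0, Fintype.range_linearCombination, hkg]
  obtain ⟨y, rfl⟩ := LinearMap.rTensor_surjective E (g := v) hv z
  set yi : Fin b → E := fun i => ctr (R := R) (LinearMap.proj i) y with hyi
  set ψ : (Fin b → R) →ₗ[R] ((Fin b → R) →ₗ[R] R) :=
    Fintype.linearCombination R (fun i => (LinearMap.proj i : (Fin b → R) →ₗ[R] R)) with hψ0
  have hψsum : ∀ c : Fin b → R,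
      ψ c = ∑ i, c i • (LinearMap.proj i : (Fin b → R) →ₗ[R] R) := by
    intro c; rw [hψ0, Fintype.linearCombination_apply]
  have hψ : ∀ c d : Fin b → R, ψ c d = ∑ i, c i * d i := by
    intro c d
    rw [hψsum]
    simp [LinearMap.sum_apply, LinearMap.smul_apply, LinearMap.proj_apply, smul_eq_mul]
  set Alin : (Fin b → R) →ₗ[R] (Fin a → R) :=
    LinearMap.pi (fun j => ψ.flip (u (epi j))) with hA0
  have hAapp : ∀ (c : Fin b → R) (j : Fin a), Alin c j = ψ c (u (epi j)) :=
    fun c j => rfl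
  have hucomp : ∀ c : Fin b → R, Alin c = 0 → ∀ x, ψ c (u x) = 0 := by
    intro c hc x
    have hx : u x = ∑ j, x j • u (epi j) := by
      conv_lhs => rw [← Finset.univ_sum_single x]
      rw [map_sum]
      refine Finset.sum_congr rfl fun j _ => ?_
      rw [← map_smul, single_eq_smul_epi]
    rw [hx, map_sum]
    refine Finset.sum_eq_zero fun j _ => ?_
    rw [map_smul]
    have hj : ψ c (u (epi j)) = 0 := by
      rw [← hAapp, hc]; rfl
    rw [hj, smul_zero]
  set ρ : (Fin b → R) →ₗ[R] E := Fintype.linearCombination R yi with hρ0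
  have hρapp : ∀ c, ρ c = ∑ i, c i • yi i := fun c => by
    rw [hρ0, Fintype.linearCombination_apply]
  have hctrψ : ∀ c, ctr (R := R) (ψ c) y = ρ c := by
    intro c
    rw [hρapp, hψsum, ctr_sum_smul]
  have hkerle : LinearMap.ker Alin ≤ LinearMap.ker ρ := by
    intro c hc
    rw [LinearMap.mem_ker] at hc ⊢
    have hvk : LinearMap.ker v ≤ LinearMap.ker (ψ c) := by
      intro x hx
      rw [← hrange] at hx
      obtain ⟨x', rfl⟩ := hx
      exact LinearMap.mem_ker.mpr (hucomp c hc x')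
    set ee := v.quotKerEquivOfSurjective hv with hee
    set φ : M →ₗ[R] R :=
      (Submodule.liftQ (LinearMap.ker v) (ψ c) hvk).comp ee.symm.toLinearMap with hφ0
    have he1 : ∀ x, ee (Submodule.Quotient.mk x) = v x := fun x => rfl
    have hfac : ∀ x, φ (v x) = ψ c x := by
      intro x
      have he2 : ee.symm (v x) = Submodule.Quotient.mk x := by
        apply ee.injective; rw [LinearEquiv.apply_symm_apply, he1]
      rw [hφ0, LinearMap.comp_apply, LinearEquiv.coe_coe, he2, Submodule.liftQ_apply]
    have hψφ : ψ c = φ.comp v := LinearMap.ext fun x => (hfac x).symm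
    rw [← hctrψ c, hψφ, ctr_comp]
    exact hz φ
  obtain ⟨θ, hθ⟩ := extend_of_le_ker hE Alin ρ hkerle
  have hAsingle : ∀ i : Fin b, Alin (epi i) = fun j => u (epi j) i := by
    intro i
    funext j
    rw [hAapp, hψ]
    exact pisingle_sum_mul i _
  have hwy : u.rTensor E (∑ j, (epi j : Fin a → R) ⊗ₜ[R] θ (epi j)) = y := by
    rw [map_sum]
    have hterm : ∀ j, u.rTensor E ((epi j : Fin a → R) ⊗ₜ[R] θ (epi j))
        = ∑ i, (epi i : Fin b → R) ⊗ₜ[R] (u (epi j) i • θ (epi j)) := by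
      intro j
      rw [LinearMap.rTensor_tmul]
      calc u (epi j) ⊗ₜ[R] θ (epi j)
          = (∑ i, Pi.single i (u (epi j) i)) ⊗ₜ[R] θ (epi j) := by
            rw [Finset.univ_sum_single]
        _ = ∑ i, Pi.single i (u (epi j) i) ⊗ₜ[R] θ (epi j) :=
            TensorProduct.sum_tmul _ _ _
        _ = ∑ i, (epi i : Fin b → R) ⊗ₜ[R] (u (epi j) i • θ (epi j)) := by
            refine Finset.sum_congr rfl fun i _ => ?_
            rw [single_eq_smul_epi, TensorProduct.smul_tmul]
    rw [Finset.sum_congr rfl fun j _ => hterm j, Finset.sum_comm]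
    have hinner : ∀ i : Fin b,
        (∑ j, (epi i : Fin b → R) ⊗ₜ[R] (u (epi j) i • θ (epi j)))
          = (epi i : Fin b → R) ⊗ₜ[R] yi i := by
      intro i
      rw [← TensorProduct.tmul_sum]
      congr 1
      have h3 : ∑ j, u (epi j) i • θ (epi j)
          = θ (∑ j, Pi.single j (u (epi j) i)) := by
        rw [map_sum]
        refine Finset.sum_congr rfl fun j _ => ?_
        rw [single_eq_smul_epi, map_smul]
      rw [h3, Finset.univ_sum_single (fun j => u (epi j) i)]
      rw [show (fun j => u (epi j) i) = Alin (epi i) from (hAsingle i).symm]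
      rw [hθ, hρapp]
      exact pisingle_sum_smul i yi
    rw [Finset.sum_congr rfl fun i _ => hinner i]
    exact (tensor_pi_decomp y).symm
  have hcomp : v.comp u = (0 : (Fin a → R) →ₗ[R] M) := by
    apply LinearMap.ext; intro x
    have hm : u x ∈ LinearMap.ker v := hrange ▸ LinearMap.mem_range_self u x
    simpa using hm
  calc v.rTensor E y
      = v.rTensor E (u.rTensor E (∑ j, (epi j : Fin a → R) ⊗ₜ[R] θ (epi j))) := by
        rw [hwy]
    _ = (v.comp u).rTensor E (∑ j, (epi j : Fin a → R) ⊗ₜ[R] θ (epi j)) := by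
        rw [← LinearMap.comp_apply, ← LinearMap.rTensor_comp]
    _ = 0 := by rw [hcomp, LinearMap.rTensor_zero, LinearMap.zero_apply]

end Detect
section FrobFinite

variable {R : Type u} [CommRing R] {p : ℕ} [Fact p.Prime] [CharP R p]

/-- Identification `R^{(n)} → R` on underlying sets. -/
def frv {R : Type u} [CommRing R] {p n : ℕ} [Fact p.Prime] [CharP R p]
    (h : FrobAlg R p n) : R := h

lemma frobAlg_finite (hFF : IsFFinite R p) (n : ℕ) : Module.Finite R (FrobAlg R p n) := by
  classical
  induction n with
  | zero =>
    refine ⟨⟨{(1 : FrobAlg R p 0)}, ?_⟩⟩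
    rw [eq_top_iff]
    intro x _
    have hx : (frv x) • (1 : FrobAlg R p 0) = x := by
      rw [frobAlg_smul]
      show frv x ^ p ^ 0 * 1 = x
      rw [pow_zero, pow_one, mul_one]
      rfl
    rw [← hx]
    exact Submodule.smul_mem _ _ (Submodule.subset_span (by simp))
  | succ n ih =>
    obtain ⟨s, hs⟩ := ih.fg_top
    obtain ⟨t, ht⟩ := (id hFF : Module.Finite R (FrobAlg R p 1)).fg_top
    refine ⟨⟨Finset.image₂
      (fun (h : FrobAlg R p n) (g : FrobAlg R p 1) =>
        FrobAlg.of R p (n + 1) (frv h ^ p * frv g)) s t, ?_⟩⟩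
    rw [eq_top_iff]
    intro x _
    have hx1 : (FrobAlg.of R p 1 (frv x)) ∈ Submodule.span R (↑t : Set (FrobAlg R p 1)) := by
      rw [ht]; trivial
    obtain ⟨f, -, hf⟩ := Submodule.mem_span_finset.mp hx1
    have hrep : ∀ g : FrobAlg R p 1, ∃ dd : FrobAlg R p n → R,
        ∑ h ∈ s, dd h • h = FrobAlg.of R p n (f g) := by
      intro g
      have hmem : (FrobAlg.of R p n (f g)) ∈ Submodule.span R (↑s : Set (FrobAlg R p n)) := by
        rw [hs]; trivial
      exact (Submodule.mem_span_finset.mp hmem).imp fun _ h => h.2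
    choose d hd using hrep
    have E1 : x = ∑ g ∈ t, ∑ h ∈ s,
        d g h • (FrobAlg.of R p (n + 1) (frv h ^ p * frv g)) := by
      have hfR : ∀ g : FrobAlg R p 1, f g = ∑ h ∈ s, d g h ^ p ^ n * frv h := by
        intro g
        have h5 := hd g
        rw [Finset.sum_congr rfl (fun h _ => frobAlg_smul n (d g h) h)] at h5
        exact h5.symm
      have hxR : frv x = ∑ g ∈ t, f g ^ p * frv g := by
        have h6 := hf
        rw [Finset.sum_congr rfl (fun g _ => frobAlg_smul 1 (f g) g)] at h6
        have h2 : ∀ g : FrobAlg R p 1,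
            FrobAlg.of R p 1 (f g ^ p ^ 1) * g = FrobAlg.of R p 1 (f g ^ p * frv g) := by
          intro g; rw [pow_one]; rfl
        rw [Finset.sum_congr rfl (fun g _ => h2 g)] at h6
        have h7 : FrobAlg.of R p 1 (∑ g ∈ t, f g ^ p * frv g) = FrobAlg.of R p 1 (frv x) := by
          rw [← h6]
          show _ = ∑ g ∈ t, FrobAlg.of R p 1 (f g ^ p * frv g)
          rfl
        exact h7.symm
      have h3 : ∀ (g : FrobAlg R p 1) (h : FrobAlg R p n),
          d g h • (FrobAlg.of R p (n + 1) (frv h ^ p * frv g))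
            = FrobAlg.of R p (n + 1) (d g h ^ p ^ (n + 1) * (frv h ^ p * frv g)) := by
        intro g h
        rw [frobAlg_smul]
        rfl
      rw [Finset.sum_congr rfl (fun g _ => Finset.sum_congr rfl (fun h _ => h3 g h))]
      show FrobAlg.of R p (n+1) (frv x) = _
      have h8 : ∀ g : FrobAlg R p 1,
          (∑ h ∈ s, FrobAlg.of R p (n + 1) (d g h ^ p ^ (n + 1) * (frv h ^ p * frv g)))
            = FrobAlg.of R p (n+1) (f g ^ p * frv g) := by
        intro g
        show _ = FrobAlg.of R p (n+1) (f g ^ p * frv g)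
        have h4 : f g ^ p = ∑ h ∈ s, d g h ^ p ^ (n + 1) * frv h ^ p := by
          conv_lhs => rw [hfR g, ← frobenius_def (R := R) (p := p)]
          rw [map_sum]
          refine Finset.sum_congr rfl fun h _ => ?_
          rw [map_mul, frobenius_def, frobenius_def, ← pow_mul, ← pow_succ]
        have harith : (∑ h ∈ s, d g h ^ p ^ (n + 1) * (frv h ^ p * frv g))
            = f g ^ p * frv g := by
          rw [h4, Finset.sum_mul]
          exact Finset.sum_congr rfl fun h _ => (mul_assoc _ _ _).symm
        show FrobAlg.of R p (n+1) (∑ h ∈ s, d g h ^ p ^ (n + 1) * (frv h ^ p * frv g))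
            = FrobAlg.of R p (n+1) (f g ^ p * frv g)
        exact congrArg (FrobAlg.of R p (n+1)) harith
      rw [Finset.sum_congr rfl (fun g _ => h8 g)]
      show FrobAlg.of R p (n+1) (frv x) = ∑ g ∈ t, FrobAlg.of R p (n+1) (f g ^ p * frv g)
      rw [hxR]
      rfl
    rw [E1]
    refine Submodule.sum_mem _ fun g hg => Submodule.sum_mem _ fun h hh => ?_
    refine Submodule.smul_mem _ _ (Submodule.subset_span ?_)
    exact Finset.mem_coe.mpr (Finset.mem_image₂_of_mem hh hg)

end FrobFinite
section PhiMachinery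

variable {R : Type u} [CommRing R] {p : ℕ} [Fact p.Prime] [CharP R p]
  {E : Type u} [AddCommGroup E] [Module R E]

/-- The `k`-th component of an element of `Φ(E)`. -/
noncomputable def pcmp (g : PhiModule R p E) (k : ℕ) : FrobBC R p k E :=
  (show ⨁ n : ℕ, FrobBC R p n E from g) k

lemma pcmp_zero (k : ℕ) : pcmp (0 : PhiModule R p E) k = 0 :=
  DirectSum.zero_apply _

lemma pcmp_add (g h : PhiModule R p E) (k : ℕ) :
    pcmp (g + h) k = pcmp g k + pcmp h k :=
  DirectSum.add_apply _ _ _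

lemma pcmp_smul (c : R) (g : PhiModule R p E) (k : ℕ) :
    pcmp (c • g) k = c • pcmp g k :=
  DirectSum.smul_apply _ _ _

lemma pcmp_of_same (m : ℕ) (t : FrobBC R p m E) :
    pcmp (PhiModule.of R p E m t) m = t :=
  DirectSum.of_eq_same _ _

lemma pcmp_of_ne {m k : ℕ} (h : m ≠ k) (t : FrobBC R p m E) :
    pcmp (PhiModule.of R p E m t) k = 0 :=
  DirectSum.of_eq_of_ne _ _ _ h.symm

lemma pcmp_ext_zero (g : PhiModule R p E) (h : ∀ k, pcmp g k = 0) : g = 0 :=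
  DFinsupp.ext h

/-- One Frobenius step on a component, as an additive map. -/
noncomputable def Xstep (m : ℕ) : FrobBC R p m E →+ FrobBC R p (m + 1) E :=
  (TensorProduct.map (frobStep R p m) (LinearMap.id (R := R) (M := E))).toAddMonoidHom

lemma Xstep_tmul (m : ℕ) (r : R) (e : E) :
    Xstep m (FrobBC.tmul R p m r e) = FrobBC.tmul R p (m + 1) (r ^ p) e := by
  show (TensorProduct.map (frobStep R p m) LinearMap.id)
    ((FrobAlg.of R p m r) ⊗ₜ[R] e) = (FrobAlg.of R p (m+1) (r ^ p)) ⊗ₜ[R] e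
  rw [TensorProduct.map_tmul, frobStep_apply]
  rfl

lemma shift_of (m : ℕ) (t : FrobBC R p m E) :
    PhiModule.shift R p E (PhiModule.of R p E m t) = PhiModule.of R p E (m + 1) (Xstep m t) :=
  DirectSum.toAddMonoid_of _ _ _

lemma of_smul' (m : ℕ) (c : R) (t : FrobBC R p m E) :
    PhiModule.of R p E m (c • t) = c • PhiModule.of R p E m t :=
  DirectSum.of_smul _ _ _ _

lemma of_zero' (m : ℕ) : PhiModule.of R p E m (0 : FrobBC R p m E) = 0 :=
  map_zero (DirectSum.of (fun n : ℕ => FrobBC R p n E) m)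

lemma pcmp_shift (g : PhiModule R p E) (k : ℕ) :
    pcmp (PhiModule.shift R p E g) (k + 1) = Xstep k (pcmp g k) := by
  induction g using DirectSum.induction_on with
  | zero =>
    show pcmp (PhiModule.shift R p E (0 : PhiModule R p E)) (k + 1)
        = Xstep k (pcmp (0 : PhiModule R p E) k)
    rw [map_zero, pcmp_zero, pcmp_zero, map_zero]
  | of m t =>
    rcases eq_or_ne m k with rfl | hne
    · show pcmp (PhiModule.shift R p E (PhiModule.of R p E m t)) (m + 1)
          = Xstep m (pcmp (PhiModule.of R p E m t) m)
      rw [shift_of, pcmp_of_same, pcmp_of_same]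
    · show pcmp (PhiModule.shift R p E (PhiModule.of R p E m t)) (k + 1)
          = Xstep k (pcmp (PhiModule.of R p E m t) k)
      rw [shift_of, pcmp_of_ne (by omega), pcmp_of_ne hne, map_zero]
  | add x y hx hy =>
    show pcmp (PhiModule.shift R p E
        ((show PhiModule R p E from x) + (show PhiModule R p E from y))) (k + 1)
        = Xstep k (pcmp ((show PhiModule R p E from x) + (show PhiModule R p E from y)) k)
    rw [map_add, pcmp_add, pcmp_add, hx, hy, map_add]

/-- `k` Frobenius steps on a component. -/
noncomputable def XN (m : ℕ) : (k : ℕ) → (FrobBC R p m E →+ FrobBC R p (m + k) E)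
  | 0 => AddMonoidHom.id _
  | (k + 1) => (Xstep (m + k)).comp (XN m k)

lemma pcmp_shift_iter (k : ℕ) (g : PhiModule R p E) (m : ℕ) :
    pcmp ((PhiModule.shift R p E)^[k] g) (m + k) = XN m k (pcmp g m) := by
  induction k generalizing g with
  | zero => rfl
  | succ k ih =>
    rw [Function.iterate_succ_apply']
    show pcmp (PhiModule.shift R p E ((PhiModule.shift R p E)^[k] g)) ((m + k) + 1) = _
    rw [pcmp_shift, ih]
    rfl

lemma frobBC_smul_tmul (n : ℕ) (c r : R) (e : E) :
    c • FrobBC.tmul R p n r e = FrobBC.tmul R p n (c * r) e := by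
  show (FrobAlg.of R p n c) • ((FrobAlg.of R p n r) ⊗ₜ[R] e)
      = (FrobAlg.of R p n (c * r)) ⊗ₜ[R] e
  rw [TensorProduct.smul_tmul', smul_eq_mul]
  rfl

lemma XN_tmul (m k : ℕ) (r : R) (e : E) :
    XN m k (FrobBC.tmul R p m r e) = FrobBC.tmul R p (m + k) (r ^ p ^ k) e := by
  induction k with
  | zero =>
    show FrobBC.tmul R p m r e = FrobBC.tmul R p (m + 0) (r ^ p ^ 0) e
    rw [pow_zero, pow_one]
    rfl
  | succ k ih =>
    show Xstep (m + k) (XN m k (FrobBC.tmul R p m r e)) = _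
    rw [ih, Xstep_tmul, ← pow_mul, ← pow_succ]
    rfl

lemma frobBC_tmul_zero (n : ℕ) (r : R) :
    FrobBC.tmul R p n r (0 : E) = 0 := by
  show (FrobAlg.of R p n r) ⊗ₜ[R] (0 : E) = 0
  exact TensorProduct.tmul_zero _ _

lemma frobBC0_swap (a r : R) (e : E) :
    FrobBC.tmul R p 0 (a * r) e = FrobBC.tmul R p 0 r (a • e) := by
  show (FrobAlg.of R p 0 (a * r)) ⊗ₜ[R] e = (FrobAlg.of R p 0 r) ⊗ₜ[R] (a • e)
  have h1 : FrobAlg.of R p 0 (a * r) = a • (FrobAlg.of R p 0 r) := by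
    rw [frobAlg_smul 0 a]
    show a * r = a ^ p ^ 0 * r
    rw [pow_zero, pow_one]
  rw [h1]
  exact TensorProduct.smul_tmul a _ e

/-- The degree-zero retraction `R^{(0)} ⊗ E → E`. -/
noncomputable def L0 : FrobBC R p 0 E →+ E :=
  TensorProduct.liftAddHom (show FrobAlg R p 0 →+ (E →+ E) from smulAddHom R E) (by
    intro r m e
    show (frv (r • m)) • e = frv m • (r • e)
    rw [frobAlg_smul 0 r m]
    show (r ^ p ^ 0 * frv m) • e = frv m • (r • e)
    rw [pow_zero, pow_one, mul_comm, mul_smul])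

lemma L0_tmul (r : R) (e : E) : L0 (FrobBC.tmul R p 0 r e) = r • e := rfl

/-- Contraction of a Frobenius component against a functional `R^{(n)} → R`. -/
noncomputable def Psi (n : ℕ) (φ : FrobAlg R p n →ₗ[R] R) : FrobBC R p n E →+ E :=
  TensorProduct.liftAddHom ((smulAddHom R E).comp φ.toAddMonoidHom) (by
    intro r m e
    show φ (r • m) • e = φ m • (r • e)
    rw [map_smul, smul_eq_mul, mul_smul]
    exact smul_comm r (φ m) e)

lemma Psi_tmul (n : ℕ) (φ : FrobAlg R p n →ₗ[R] R) (r : R) (e : E) :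
    Psi n φ (FrobBC.tmul R p n r e) = φ (FrobAlg.of R p n r) • e := rfl

/-- Lowering a functional `R^{(n)} → R` to a map `R^{(m+n)} → R^{(m)}`. -/
noncomputable def phiDown (n : ℕ) (φ : FrobAlg R p n →ₗ[R] R) (m : ℕ) :
    FrobAlg R p (m + n) →ₗ[R] FrobAlg R p m where
  toFun s := FrobAlg.of R p m (φ (FrobAlg.of R p n (frv s)))
  map_add' x y := by
    show FrobAlg.of R p m (φ (FrobAlg.of R p n (frv x) + FrobAlg.of R p n (frv y))) = _
    rw [map_add]
    rfl
  map_smul' c s := by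
    simp only [RingHom.id_apply]
    have h0 : frv (c • s) = c ^ p ^ (m + n) * frv s := by
      rw [frobAlg_smul (m + n) c s]; rfl
    have h1 : FrobAlg.of R p n (frv (c • s)) = (c ^ p ^ m) • (FrobAlg.of R p n (frv s)) := by
      rw [frobAlg_smul n (c ^ p ^ m)]
      show frv (c • s) = (c ^ p ^ m) ^ p ^ n * frv s
      rw [h0, ← pow_mul, ← pow_add]
    rw [h1, map_smul]
    rw [frobAlg_smul m c]
    show c ^ p ^ m * φ (FrobAlg.of R p n (frv s)) = _
    rfl

/-- The degree-lowering contraction on components. -/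
noncomputable def Theta (n : ℕ) (φ : FrobAlg R p n →ₗ[R] R) (m : ℕ) :
    FrobBC R p (m + n) E →+ FrobBC R p m E :=
  (TensorProduct.map (phiDown n φ m) (LinearMap.id (R := R) (M := E))).toAddMonoidHom

lemma Theta_tmul (n : ℕ) (φ : FrobAlg R p n →ₗ[R] R) (m : ℕ) (r : R) (e : E) :
    Theta n φ m (FrobBC.tmul R p (m + n) r e)
      = FrobBC.tmul R p m (φ (FrobAlg.of R p n r)) e := by
  show (TensorProduct.map (phiDown n φ m) LinearMap.id)
    ((FrobAlg.of R p (m + n) r) ⊗ₜ[R] e) = _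
  rw [TensorProduct.map_tmul]
  rfl

lemma map_Xstep_smul (m : ℕ) (c : R) (t : FrobBC R p m E) :
    Xstep m (c • t) = (c ^ p) • Xstep m t := by
  induction t using TensorProduct.induction_on with
  | zero =>
    show Xstep m (c • (0 : FrobBC R p m E)) = (c ^ p) • Xstep m (0 : FrobBC R p m E)
    rw [smul_zero, map_zero, smul_zero]
  | tmul s e =>
    show Xstep m (c • FrobBC.tmul R p m (frv s) e)
        = (c ^ p) • Xstep m (FrobBC.tmul R p m (frv s) e)
    rw [frobBC_smul_tmul, Xstep_tmul, Xstep_tmul, frobBC_smul_tmul, mul_pow]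
  | add x y hx hy =>
    show Xstep m (c • ((show FrobBC R p m E from x) + (show FrobBC R p m E from y)))
        = (c ^ p) • Xstep m ((show FrobBC R p m E from x) + (show FrobBC R p m E from y))
    rw [smul_add, map_add, hx, hy, map_add, smul_add]

lemma shift_smul (c : R) (g : PhiModule R p E) :
    PhiModule.shift R p E (c • g) = (c ^ p) • PhiModule.shift R p E g := by
  induction g using DirectSum.induction_on with
  | zero =>
    show PhiModule.shift R p E (c • (0 : PhiModule R p E))
        = (c ^ p) • PhiModule.shift R p E (0 : PhiModule R p E)
    rw [smul_zero, map_zero, smul_zero]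
  | of m t =>
    show PhiModule.shift R p E (c • PhiModule.of R p E m t)
        = (c ^ p) • PhiModule.shift R p E (PhiModule.of R p E m t)
    rw [← of_smul', shift_of, map_Xstep_smul, of_smul', shift_of]
  | add x y hx hy =>
    show PhiModule.shift R p E
        (c • ((show PhiModule R p E from x) + (show PhiModule R p E from y)))
        = (c ^ p) • PhiModule.shift R p E
          ((show PhiModule R p E from x) + (show PhiModule R p E from y))
    rw [smul_add, map_add, hx, hy, map_add, smul_add]

end PhiMachinery

section Implications

variable {R : Type u} [CommRing R] {p : ℕ} [Fact p.Prime] [CharP R p]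
  {E : Type u} [AddCommGroup E] [Module R E]

lemma fully_implies_ufc [IsLocalRing R] (hE : Module.Injective R E)
    (ι : (R ⧸ maximalIdeal R) →ₗ[R] E) (hι : Function.Injective ι) (𝔞 : Ideal R)
    (hf : IsFullyPhiSpecial R p E 𝔞) : UniformlyFCompatible R p 𝔞 := by
  intro n hn φ b hb
  apply mem_of_colon_ann hE ι hι
  intro e he
  have h0 : FrobBC.tmul R p n b e = 0 := hf n hn b hb e he
  have h1 := congrArg (Psi n φ) h0
  rw [map_zero] at h1
  calc φ (FrobAlg.of R p n b) • e
      = Psi n φ (FrobBC.tmul R p n b e) := (Psi_tmul n φ b e).symm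
    _ = 0 := h1

lemma ufc_implies_fully [IsNoetherianRing R] (hE : Module.Injective R E)
    (hFF : IsFFinite R p) (𝔞 : Ideal R) (hu : UniformlyFCompatible R p 𝔞) :
    IsFullyPhiSpecial R p E 𝔞 := by
  intro n hn r hr e he
  exact tensor_detect hE (frobAlg_finite hFF n) _ (fun φ => by
    rw [show FrobBC.tmul R p n r e = (FrobAlg.of R p n r) ⊗ₜ[R] e from rfl, ctr_tmul]
    exact he _ (hu n hn φ r hr))

lemma special_implies_ufc (𝔞 : Ideal R) (hs : IsPhiSpecial R p E 𝔞) :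
    UniformlyFCompatible R p 𝔞 := by
  obtain ⟨N, hstab, rfl⟩ := hs
  intro n _ φ b hb
  rw [Submodule.mem_annihilator] at hb ⊢
  intro g hg
  have hiter : ∀ k, (PhiModule.shift R p E)^[k] g ∈ N := by
    intro k
    induction k with
    | zero => exact hg
    | succ k ih => rw [Function.iterate_succ_apply']; exact hstab _ ih
  have hkill : b • (PhiModule.shift R p E)^[n] g = 0 := hb _ (hiter n)
  have hzero : ∀ m : ℕ, (φ (FrobAlg.of R p n b)) • pcmp g m = 0 := by
    intro m
    have h1 : b • XN m n (pcmp g m) = 0 := by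
      rw [← pcmp_shift_iter, ← pcmp_smul, hkill, pcmp_zero]
    have key : ∀ t : FrobBC R p m E,
        Theta n φ m (b • XN m n t) = (φ (FrobAlg.of R p n b)) • t := by
      intro t
      induction t using TensorProduct.induction_on with
      | zero =>
        show Theta n φ m (b • XN m n (0 : FrobBC R p m E))
            = (φ (FrobAlg.of R p n b)) • (0 : FrobBC R p m E)
        simp
      | tmul s e =>
        show Theta n φ m (b • XN m n (FrobBC.tmul R p m (frv s) e))
            = (φ (FrobAlg.of R p n b)) • FrobBC.tmul R p m (frv s) e
        rw [XN_tmul, frobBC_smul_tmul, Theta_tmul, frobBC_smul_tmul]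
        have hφ : φ (FrobAlg.of R p n (b * frv s ^ p ^ n))
            = φ (FrobAlg.of R p n b) * frv s := by
          have h5 : FrobAlg.of R p n (b * frv s ^ p ^ n)
              = (frv s) • FrobAlg.of R p n b := by
            rw [frobAlg_smul n (frv s)]
            show b * frv s ^ p ^ n = frv s ^ p ^ n * b
            ring
          rw [h5, map_smul, smul_eq_mul, mul_comm]
        rw [hφ, mul_comm]
      | add x y hx hy =>
        show Theta n φ m (b • XN m n ((show FrobBC R p m E from x) + (show FrobBC R p m E from y)))
            = (φ (FrobAlg.of R p n b)) •
              ((show FrobBC R p m E from x) + (show FrobBC R p m E from y))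
        rw [map_add, smul_add, map_add, hx, hy, smul_add]
    have h2 := key (pcmp g m)
    rw [h1, map_zero] at h2
    exact h2.symm
  apply pcmp_ext_zero
  intro k
  rw [pcmp_smul]
  exact hzero k

lemma fully_implies_special [IsLocalRing R] (hE : Module.Injective R E)
    (ι : (R ⧸ maximalIdeal R) →ₗ[R] E) (hι : Function.Injective ι) (𝔞 : Ideal R)
    (hf : IsFullyPhiSpecial R p E 𝔞) : IsPhiSpecial R p E 𝔞 := by
  classical
  refine ⟨Submodule.span R {g | ∃ (n : ℕ) (r : R) (e : E), (∀ a ∈ 𝔞, a • e = 0) ∧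
    g = PhiModule.of R p E n (FrobBC.tmul R p n r e)}, ?_, ?_⟩
  · intro g hg
    induction hg using Submodule.span_induction with
    | mem x hx =>
      obtain ⟨n, r, e, he, rfl⟩ := hx
      rw [shift_of, Xstep_tmul]
      exact Submodule.subset_span ⟨n + 1, r ^ p, e, he, rfl⟩
    | zero => rw [map_zero]; exact Submodule.zero_mem _
    | add x y hx hy hx' hy' => rw [map_add]; exact Submodule.add_mem _ hx' hy'
    | smul c x hx hx' => rw [shift_smul]; exact Submodule.smul_mem _ _ hx'
  · apply le_antisymm
    · intro a ha
      rw [Submodule.mem_annihilator]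
      intro g hg
      induction hg using Submodule.span_induction with
      | mem x hx =>
        obtain ⟨n, r, e, he, rfl⟩ := hx
        rw [← of_smul']
        have hz : a • FrobBC.tmul R p n r e = 0 := by
          match n with
          | 0 =>
            rw [frobBC_smul_tmul, frobBC0_swap, he a ha, frobBC_tmul_zero]
          | (k + 1) =>
            rw [frobBC_smul_tmul, mul_comm, ← frobBC_smul_tmul,
              hf (k + 1) (Nat.succ_le_succ (Nat.zero_le k)) a ha e he, smul_zero]
        rw [hz, of_zero']
      | zero => rw [smul_zero]
      | add x y hx hy hx' hy' => rw [smul_add, hx', hy', add_zero]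
      | smul c x hx hx' => rw [smul_smul, mul_comm, ← smul_smul, hx', smul_zero]
    · intro c hc
      rw [Submodule.mem_annihilator] at hc
      apply mem_of_colon_ann hE ι hι
      intro e he
      have h1 : c • PhiModule.of R p E 0 (FrobBC.tmul R p 0 1 e) = 0 :=
        hc _ (Submodule.subset_span ⟨0, 1, e, he, rfl⟩)
      rw [← of_smul'] at h1
      have h2 : c • FrobBC.tmul R p 0 1 e = 0 := by
        have h3 := congrArg (fun g => pcmp g 0) h1
        rw [pcmp_of_same, pcmp_zero] at h3
        exact h3
      rw [frobBC_smul_tmul, mul_one] at h2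
      have h4 := congrArg L0 h2
      rw [map_zero, L0_tmul] at h4
      exact h4

end Implications
theorem uniformly_F_compatible_iff_special_iff_fully_special (R : Type u) [CommRing R] [IsNoetherianRing R] [IsLocalRing R]
    (p : ℕ) [Fact p.Prime] [CharP R p]
    (E : Type u) [AddCommGroup E] [Module R E]
    (hE : Module.Injective R E)
    (ι : (R ⧸ maximalIdeal R) →ₗ[R] E) (hι : Function.Injective ι)
    (hess : ∀ N : Submodule R E, N ⊓ LinearMap.range ι = ⊥ → N = ⊥)
    (hFpure : IsFPure R p) (hFF : IsFFinite R p) (𝔞 : Ideal R) :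
    (UniformlyFCompatible R p 𝔞 ↔ IsPhiSpecial R p E 𝔞) ∧
      (IsPhiSpecial R p E 𝔞 ↔ IsFullyPhiSpecial R p E 𝔞) := by
  have h21 : IsPhiSpecial R p E 𝔞 → UniformlyFCompatible R p 𝔞 :=
    special_implies_ufc 𝔞
  have h13 : UniformlyFCompatible R p 𝔞 → IsFullyPhiSpecial R p E 𝔞 :=
    ufc_implies_fully hE hFF 𝔞
  have h32 : IsFullyPhiSpecial R p E 𝔞 → IsPhiSpecial R p E 𝔞 :=
    fully_implies_special hE ι hι 𝔞
  exact ⟨⟨fun h => h32 (h13 h), h21⟩, ⟨fun h => h13 (h21 h), h32⟩⟩
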